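/- Let G be a split graph with vertex partition (C, I) where C is a clique and I is an independent set. Then G is a block graph (every biconnected component is a clique) if and only if (1) every vertex in I with degree at least 2 is adjacent to all vertices of C, and (2) at most one vertex in I has degree at least 2. -/

import Mathlib

variable {V : Type*}

def IsBiconn (G : SimpleGraph V) (B : Set V) : Prop :=
  (G.induce B).Connected ∧ ∀ v ∈ B, (G.induce (B \ {v})).Connected

def IsBlock (G : SimpleGraph V) (B : Set V) : Prop :=
  IsBiconn G B ∧ ∀ B' : Set V, IsBiconn G B' → B ⊆ B' → B' = B

def IsBlockGraph (G : SimpleGraph V) : Prop :=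
  ∀ B : Set V, IsBlock G B → G.IsClique B

lemma connected_of_hub (G : SimpleGraph V) (S : Set V) (h : V) (hh : h ∈ S)
    (hadj : ∀ x ∈ S, x ≠ h → G.Adj h x) : (G.induce S).Connected := by
  rw [SimpleGraph.connected_iff]
  refine ⟨fun a b => ?_, ⟨⟨h, hh⟩⟩⟩
  have key : ∀ x : S, (G.induce S).Reachable x ⟨h, hh⟩ := by
    rintro ⟨x, hx⟩
    by_cases hxh : x = h
    · subst hxh; exact SimpleGraph.Reachable.refl _
    · exact SimpleGraph.Adj.reachable ((hadj x hx hxh).symm)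
  exact (key a).trans (key b).symm

lemma eq_of_isolated (G : SimpleGraph V) (S : Set V) (u : V) (hu : u ∈ S)
    (hconn : (G.induce S).Connected) (hiso : ∀ x ∈ S, ¬ G.Adj u x) :
    ∀ x ∈ S, x = u := by
  have key : ∀ b : S, (G.induce S).Walk ⟨u, hu⟩ b → (b : V) = u := by
    intro b p
    cases p with
    | nil => rfl
    | cons h _ => exact absurd h (hiso _ (Subtype.mem _))
  intro x hx
  obtain ⟨p⟩ := hconn.preconnected ⟨u, hu⟩ ⟨x, hx⟩
  exact key ⟨x, hx⟩ p

lemma exists_block [Fintype V] (G : SimpleGraph V) (B : Set V) (hB : IsBiconn G B) :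
    ∃ B', IsBlock G B' ∧ B ⊆ B' := by
  classical
  obtain ⟨B₀, hB₀m⟩ := (Set.toFinite {B' | IsBiconn G B' ∧ B ⊆ B'}).exists_maximal
    ⟨B, hB, subset_refl B⟩
  have hB₀ : IsBiconn G B₀ ∧ B ⊆ B₀ := hB₀m.prop
  have hmax : ∀ B' ∈ {B' | IsBiconn G B' ∧ B ⊆ B'}, B₀ ⊆ B' → B₀ = B' :=
    fun B' hB' hsub => hB₀m.eq_of_le hB' hsub
  exact ⟨B₀, ⟨hB₀.1, fun B' hB' hsub =>
    (hmax B' ⟨hB', hB₀.2.trans hsub⟩ hsub).symm⟩, hB₀.2⟩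

theorem stmt_0 [Fintype V] (G : SimpleGraph V) [DecidableRel G.Adj]
    (C I : Set V) (hunion : ∀ v, v ∈ C ∨ v ∈ I) (hdisj : Disjoint C I)
    (hC : G.IsClique C) (hI : ∀ u ∈ I, ∀ v ∈ I, ¬ G.Adj u v) :
    IsBlockGraph G ↔
      ((∀ v ∈ I, 2 ≤ G.degree v → ∀ a ∈ C, G.Adj v a) ∧
       (∀ u ∈ I, ∀ v ∈ I, 2 ≤ G.degree u → 2 ≤ G.degree v → u = v)) := by
  constructor
  · intro hBG
    have h1 : ∀ v ∈ I, 2 ≤ G.degree v → ∀ a ∈ C, G.Adj v a := by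
      intro v hv hdeg a ha
      by_contra hva
      obtain ⟨b, hb, c, hc, hbc⟩ := Finset.one_lt_card.mp hdeg
      rw [SimpleGraph.mem_neighborFinset] at hb hc
      have hnbC : ∀ x, G.Adj v x → x ∈ C := fun x hx =>
        (hunion x).resolve_right fun hxI => hI v hv x hxI hx
      have hbC := hnbC b hb
      have hcC := hnbC c hc
      have hvb : v ≠ b := G.ne_of_adj hb
      have hvc : v ≠ c := G.ne_of_adj hc
      have hva' : v ≠ a := fun h => (hdisj.ne_of_mem ha hv) h.symm
      have hab : a ≠ b := fun h => hva (h ▸ hb)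
      have hac : a ≠ c := fun h => hva (h ▸ hc)
      have hB : IsBiconn G {v, b, c, a} := by
        constructor
        · refine connected_of_hub G _ b (by simp) ?_
          intro x hx hxb
          simp only [Set.mem_insert_iff, Set.mem_singleton_iff] at hx
          rcases hx with rfl | rfl | rfl | rfl
          · exact hb.symm
          · exact absurd rfl hxb
          · exact hC hbC hcC hbc
          · exact hC hbC ha (Ne.symm hab)
        · intro w hw
          simp only [Set.mem_insert_iff, Set.mem_singleton_iff] at hw
          rcases hw with rfl | rfl | rfl | rfl
          · refine connected_of_hub G _ b ⟨by simp, by simp [Ne.symm hvb]⟩ ?_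
            intro x hx hxb
            obtain ⟨hx, hxw⟩ := hx
            simp only [Set.mem_insert_iff, Set.mem_singleton_iff] at hx hxw
            rcases hx with rfl | rfl | rfl | rfl
            · exact absurd rfl hxw
            · exact absurd rfl hxb
            · exact hC hbC hcC hbc
            · exact hC hbC ha (Ne.symm hab)
          · refine connected_of_hub G _ c ⟨by simp, by simp [Ne.symm hbc]⟩ ?_
            intro x hx hxc
            obtain ⟨hx, hxw⟩ := hx
            simp only [Set.mem_insert_iff, Set.mem_singleton_iff] at hx hxw
            rcases hx with rfl | rfl | rfl | rfl
            · exact hc.symm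
            · exact absurd rfl hxw
            · exact absurd rfl hxc
            · exact hC hcC ha (Ne.symm hac)
          · refine connected_of_hub G _ b ⟨by simp, by simp [hbc]⟩ ?_
            intro x hx hxb
            obtain ⟨hx, hxw⟩ := hx
            simp only [Set.mem_insert_iff, Set.mem_singleton_iff] at hx hxw
            rcases hx with rfl | rfl | rfl | rfl
            · exact hb.symm
            · exact absurd rfl hxb
            · exact absurd rfl hxw
            · exact hC hbC ha (Ne.symm hab)
          · refine connected_of_hub G _ b ⟨by simp, by simp [Ne.symm hab]⟩ ?_
            intro x hx hxb
            obtain ⟨hx, hxw⟩ := hx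
            simp only [Set.mem_insert_iff, Set.mem_singleton_iff] at hx hxw
            rcases hx with rfl | rfl | rfl | rfl
            · exact hb.symm
            · exact absurd rfl hxb
            · exact hC hbC hcC hbc
            · exact absurd rfl hxw
      obtain ⟨B', hB', hsub⟩ := exists_block G _ hB
      exact hva (hBG B' hB' (hsub (by simp)) (hsub (by simp)) hva')
    refine ⟨h1, ?_⟩
    intro u hu v hv hdu hdv
    by_contra huv
    obtain ⟨b, hb, c, hc, hbc⟩ := Finset.one_lt_card.mp hdu
    rw [SimpleGraph.mem_neighborFinset] at hb hc
    have hnbC : ∀ x, G.Adj u x → x ∈ C := fun x hx =>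
      (hunion x).resolve_right fun hxI => hI u hu x hxI hx
    have hbC := hnbC b hb
    have hcC := hnbC c hc
    have hvb : G.Adj v b := h1 v hv hdv b hbC
    have hvc : G.Adj v c := h1 v hv hdv c hcC
    have hub : u ≠ b := G.ne_of_adj hb
    have huc : u ≠ c := G.ne_of_adj hc
    have hvb' : v ≠ b := G.ne_of_adj hvb
    have hvc' : v ≠ c := G.ne_of_adj hvc
    have hB : IsBiconn G {u, v, b, c} := by
      constructor
      · refine connected_of_hub G _ b (by simp) ?_
        intro x hx hxb
        simp only [Set.mem_insert_iff, Set.mem_singleton_iff] at hx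
        rcases hx with rfl | rfl | rfl | rfl
        · exact hb.symm
        · exact hvb.symm
        · exact absurd rfl hxb
        · exact hC hbC hcC hbc
      · intro w hw
        simp only [Set.mem_insert_iff, Set.mem_singleton_iff] at hw
        rcases hw with rfl | rfl | rfl | rfl
        · refine connected_of_hub G _ b ⟨by simp, by simp [Ne.symm hub]⟩ ?_
          intro x hx hxb
          obtain ⟨hx, hxw⟩ := hx
          simp only [Set.mem_insert_iff, Set.mem_singleton_iff] at hx hxw
          rcases hx with rfl | rfl | rfl | rfl
          · exact absurd rfl hxw
          · exact hvb.symm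
          · exact absurd rfl hxb
          · exact hC hbC hcC hbc
        · refine connected_of_hub G _ b ⟨by simp, by simp [Ne.symm hvb']⟩ ?_
          intro x hx hxb
          obtain ⟨hx, hxw⟩ := hx
          simp only [Set.mem_insert_iff, Set.mem_singleton_iff] at hx hxw
          rcases hx with rfl | rfl | rfl | rfl
          · exact hb.symm
          · exact absurd rfl hxw
          · exact absurd rfl hxb
          · exact hC hbC hcC hbc
        · refine connected_of_hub G _ c ⟨by simp, by simp [Ne.symm hbc]⟩ ?_
          intro x hx hxc
          obtain ⟨hx, hxw⟩ := hx
          simp only [Set.mem_insert_iff, Set.mem_singleton_iff] at hx hxw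
          rcases hx with rfl | rfl | rfl | rfl
          · exact hc.symm
          · exact hvc.symm
          · exact absurd rfl hxw
          · exact absurd rfl hxc
        · refine connected_of_hub G _ b ⟨by simp, by simp [hbc]⟩ ?_
          intro x hx hxb
          obtain ⟨hx, hxw⟩ := hx
          simp only [Set.mem_insert_iff, Set.mem_singleton_iff] at hx hxw
          rcases hx with rfl | rfl | rfl | rfl
          · exact hb.symm
          · exact hvb.symm
          · exact absurd rfl hxb
          · exact absurd rfl hxw
    obtain ⟨B', hB', hsub⟩ := exists_block G _ hB
    exact hI u hu v hv (hBG B' hB' (hsub (by simp)) (hsub (by simp)) huv)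
  · rintro ⟨h1, h2⟩ B hB
    intro x hx y hy hxy
    -- first deal with low-degree I vertices in B
    by_cases hlow : ∃ u ∈ B, u ∈ I ∧ G.degree u < 2
    · obtain ⟨u, huB, huI, hud⟩ := hlow
      -- u has at most one neighbor
      interval_cases h : G.degree u
      · -- degree 0: u has no neighbors, contradiction with biconn
        have hno : ∀ z, ¬ G.Adj u z := by
          intro z hz
          have : z ∈ G.neighborFinset u := by rwa [SimpleGraph.mem_neighborFinset]
          simp [Finset.card_eq_zero.mp h] at this
        have hall := eq_of_isolated G B u huB hB.1.1 (fun z _ => hno z)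
        have := hB.1.2 u huB
        obtain ⟨⟨z, hz⟩⟩ := this.nonempty
        exact absurd (hall z hz.1) hz.2
      · -- degree 1: unique neighbor w
        obtain ⟨w, hw⟩ := Finset.card_eq_one.mp h
        have hadjw : G.Adj u w := by
          rw [← SimpleGraph.mem_neighborFinset, hw]; simp
        have honly : ∀ z, G.Adj u z → z = w := by
          intro z hz
          have : z ∈ G.neighborFinset u := by rwa [SimpleGraph.mem_neighborFinset]
          rwa [hw, Finset.mem_singleton] at this
        by_cases hwB : w ∈ B
        · -- B \ {w} is connected and u is isolated there, so B ⊆ {u, w}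
          have hall := eq_of_isolated G (B \ {w}) u ⟨huB, by simp [G.ne_of_adj hadjw]⟩
            (hB.1.2 w hwB) (fun z hz hadj => hz.2 (honly z hadj))
          have hBsub : B ⊆ {u, w} := by
            intro z hz
            by_cases hzw : z = w
            · simp [hzw]
            · simp [hall z ⟨hz, hzw⟩]
          rcases hBsub hx with rfl | rfl <;> rcases hBsub hy with rfl | rfl
          · exact absurd rfl hxy
          · exact hadjw
          · exact hadjw.symm
          · exact absurd rfl hxy
        · -- u isolated in B, contradiction
          have hall := eq_of_isolated G B u huB hB.1.1
            (fun z hz hadj => hwB (honly z hadj ▸ hz))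
          have := hB.1.2 u huB
          obtain ⟨⟨z, hz⟩⟩ := this.nonempty
          exact absurd (hall z hz.1) hz.2
    · push_neg at hlow
      -- every I vertex in B has degree ≥ 2; by h2 at most one such vertex
      have hkey : ∀ z ∈ B, ∀ z' ∈ B, z ≠ z' → G.Adj z z' := by
        intro z hz z' hz' hne
        rcases hunion z with hzC | hzI <;> rcases hunion z' with hz'C | hz'I
        · exact hC hzC hz'C hne
        · exact (h1 z' hz'I (hlow z' hz' hz'I) z hzC).symm
        · exact h1 z hzI (hlow z hz hzI) z' hz'C
        · exact absurd (h2 z hzI z' hz'I (hlow z hz hzI) (hlow z' hz' hz'I)) hne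
      exact hkey x hx y hy hxy
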